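/- Let G be a finite directed graph with nonnegative edge weights and let S ⊆ V(G) be the initial blue set. Let G⁺ denote the directed graph obtained from G by retaining exactly those directed edges of positive weight. Then ept_rzf(G,S) < ∞ if and only if every vertex of G is reachable from S by a directed path in G⁺. -/

import Mathlib

set_option linter.unusedSectionVars false


open scoped ENNReal NNReal

namespace RZF

variable {V : Type*} [Fintype V] [DecidableEq V]

/-- Probability that the white vertex `x` turns blue in one round of weighted
randomized zero forcing with weights `w`, given the current blue set `B`
(`0` when the total incoming weight of `x` is `0`). -/
noncomputable def turnProb (w : V → V → ℝ≥0) (B : Finset V) (x : V) : ℝ≥0 :=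
  (∑ u ∈ B, w u x) / ∑ u, w u x

/-- One-round transition probability of the RZF Markov chain from blue set `B`
to blue set `C`: each white vertex independently turns blue with probability
`turnProb w B ·`, and blue vertices stay blue. -/
noncomputable def stepProb (w : V → V → ℝ≥0) (B C : Finset V) : ℝ≥0∞ :=
  if B ⊆ C then
    (∏ x ∈ C \ B, (turnProb w B x : ℝ≥0∞)) *
      ∏ x ∈ Cᶜ, (1 - (turnProb w B x : ℝ≥0∞))
  else 0

/-- Distribution of the blue set after `t` rounds, started from `S`. -/
noncomputable def state (w : V → V → ℝ≥0) (S : Finset V) : ℕ → Finset V → ℝ≥0∞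
  | 0 => fun C => if C = S then 1 else 0
  | t + 1 => fun C => ∑ B : Finset V, state w S t B * stepProb w B C

/-- Expected propagation time `∑ₜ P(Bₜ ≠ V(G))`; this equals `E[τ]` when the
all-blue state is reachable from `S`, and `∞` otherwise. -/
noncomputable def ept (w : V → V → ℝ≥0) (S : Finset V) : ℝ≥0∞ :=
  ∑' t : ℕ, ∑ C ∈ Finset.univ.filter (fun C : Finset V => C ≠ Finset.univ),
    state w S t C

/-- Minimum expected propagation time over singleton starting sets. -/
noncomputable def eptMin (w : V → V → ℝ≥0) : ℝ≥0∞ :=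
  ⨅ v : V, ept w {v}

/-- The weight function of an unweighted directed graph: weight `1` on each
edge and `0` otherwise, so that `turnProb` is the fraction of in-neighbors
that are blue. -/
def unweight (adj : V → V → Prop) [DecidableRel adj] : V → V → ℝ≥0 :=
  fun u v => if adj u v then 1 else 0

end RZF

/-- `reachIn adj t a b` : there is a directed path of length at most `t`
from `a` to `b` in the directed graph with adjacency relation `adj`. -/
def reachIn {V : Type*} (adj : V → V → Prop) : ℕ → V → V → Prop
  | 0, a, b => a = b
  | t + 1, a, b => reachIn adj t a b ∨ ∃ c, reachIn adj t a c ∧ adj c b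

namespace RZF

open Finset

variable {V : Type*} [Fintype V] [DecidableEq V]

lemma turnProb_le_one (w : V → V → ℝ≥0) (B : Finset V) (x : V) :
    turnProb w B x ≤ 1 := by
  unfold turnProb
  rcases eq_or_ne (∑ u, w u x) 0 with h | h
  · simp [h]
  · rw [div_le_one (pos_iff_ne_zero.mpr h)]
    exact Finset.sum_le_sum_of_subset (Finset.subset_univ B)

lemma turnProb_pos (w : V → V → ℝ≥0) (B : Finset V) (x : V)
    (h : ∃ u ∈ B, 0 < w u x) : 0 < turnProb w B x := by
  obtain ⟨u, hu, hw⟩ := h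
  have hnum : 0 < ∑ u ∈ B, w u x := Finset.sum_pos' (fun _ _ => zero_le) ⟨u, hu, hw⟩
  have hden : 0 < ∑ u, w u x :=
    lt_of_lt_of_le hnum (Finset.sum_le_sum_of_subset (Finset.subset_univ B))
  exact div_pos hnum hden

lemma turnProb_eq_zero (w : V → V → ℝ≥0) (B : Finset V) (x : V)
    (h : ∀ u ∈ B, w u x = 0) : turnProb w B x = 0 := by
  unfold turnProb
  rw [Finset.sum_eq_zero h, zero_div]

lemma exists_mem_of_turnProb_ne_zero (w : V → V → ℝ≥0) (B : Finset V) (x : V)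
    (h : turnProb w B x ≠ 0) : ∃ u ∈ B, 0 < w u x := by
  by_contra hc
  push_neg at hc
  exact h (turnProb_eq_zero w B x fun u hu => le_antisymm (hc u hu) zero_le)

lemma sum_stepProb (w : V → V → ℝ≥0) (B : Finset V) :
    ∑ C, stepProb w B C = 1 := by
  classical
  have h1 : ∑ C, stepProb w B C
      = ∑ C ∈ Finset.univ.filter (fun C : Finset V => B ⊆ C),
          ((∏ x ∈ C \ B, (turnProb w B x : ℝ≥0∞)) *
            ∏ x ∈ Cᶜ, (1 - (turnProb w B x : ℝ≥0∞))) := by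
    rw [Finset.sum_filter]
    refine Finset.sum_congr rfl fun C _ => ?_
    rw [stepProb]
  rw [h1]
  have h2 : ∑ C ∈ Finset.univ.filter (fun C : Finset V => B ⊆ C),
      ((∏ x ∈ C \ B, (turnProb w B x : ℝ≥0∞)) *
        ∏ x ∈ Cᶜ, (1 - (turnProb w B x : ℝ≥0∞)))
      = ∑ A ∈ Bᶜ.powerset,
          ((∏ x ∈ A, (turnProb w B x : ℝ≥0∞)) *
            ∏ x ∈ Bᶜ \ A, (1 - (turnProb w B x : ℝ≥0∞))) := by
    refine Finset.sum_nbij' (fun C => C \ B) (fun A => B ∪ A) ?_ ?_ ?_ ?_ ?_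
    · intro C hC
      rw [Finset.mem_powerset]
      intro x hx
      exact Finset.mem_compl.mpr (Finset.mem_sdiff.mp hx).2
    · intro A hA
      simp only [Finset.mem_filter, Finset.mem_univ, true_and]
      exact Finset.subset_union_left
    · intro C hC
      simp only [Finset.mem_filter, Finset.mem_univ, true_and] at hC
      exact Finset.union_sdiff_of_subset hC
    · intro A hA
      rw [Finset.mem_powerset] at hA
      refine Finset.union_sdiff_cancel_left ?_
      rw [Finset.disjoint_left]
      intro x hxB hxA
      exact (Finset.mem_compl.mp (hA hxA)) hxB
    · intro C hC
      simp only [Finset.mem_filter, Finset.mem_univ, true_and] at hC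
      congr 1
      congr 1
      ext x
      simp only [Finset.mem_compl, Finset.mem_sdiff]
      constructor
      · intro hx
        exact ⟨fun hxB => hx (hC hxB), fun h' => hx h'.1⟩
      · rintro ⟨hxB, hx⟩ hxC
        exact hx ⟨hxC, hxB⟩
  rw [h2, ← Finset.prod_add]
  refine Finset.prod_eq_one fun x _ => ?_
  exact add_tsub_cancel_of_le (ENNReal.coe_le_one_iff.mpr (turnProb_le_one w B x))

lemma state_total (w : V → V → ℝ≥0) (S : Finset V) (t : ℕ) :
    ∑ C, state w S t C = 1 := by
  induction t with
  | zero => simp [state]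
  | succ t ih =>
    show (∑ C, ∑ B : Finset V, state w S t B * stepProb w B C) = 1
    rw [Finset.sum_comm]
    simp_rw [← Finset.mul_sum, sum_stepProb, mul_one]
    exact ih

lemma subset_of_stepProb_ne_zero {w : V → V → ℝ≥0} {B C : Finset V}
    (h : stepProb w B C ≠ 0) : B ⊆ C := by
  by_contra hc
  exact h (by rw [stepProb, if_neg hc])

lemma subset_of_state_ne_zero {w : V → V → ℝ≥0} {S : Finset V} :
    ∀ {t : ℕ} {C : Finset V}, state w S t C ≠ 0 → S ⊆ C := by
  intro t
  induction t with
  | zero =>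
    intro C h
    by_cases hC : C = S
    · exact hC ▸ subset_rfl
    · simp [state, hC] at h
  | succ t ih =>
    intro C h
    obtain ⟨B, -, hB⟩ := Finset.exists_ne_zero_of_sum_ne_zero h
    obtain ⟨h1, h2⟩ := mul_ne_zero_iff.mp hB
    exact (ih h1).trans (subset_of_stepProb_ne_zero h2)

/-- Every blue vertex at any time is reachable from `S` along positive edges. -/
lemma state_reachable {w : V → V → ℝ≥0} {S : Finset V} :
    ∀ {t : ℕ} {C : Finset V}, state w S t C ≠ 0 →
      ∀ x ∈ C, ∃ s ∈ S, Relation.ReflTransGen (fun a b => 0 < w a b) s x := by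
  intro t
  induction t with
  | zero =>
    intro C h x hx
    by_cases hC : C = S
    · subst hC; exact ⟨x, hx, Relation.ReflTransGen.refl⟩
    · simp [state, hC] at h
  | succ t ih =>
    intro C h x hx
    obtain ⟨B, -, hB⟩ := Finset.exists_ne_zero_of_sum_ne_zero h
    obtain ⟨h1, h2⟩ := mul_ne_zero_iff.mp hB
    by_cases hxB : x ∈ B
    · exact ih h1 x hxB
    · have hBC := subset_of_stepProb_ne_zero h2
      have hp : turnProb w B x ≠ 0 := by
        rw [stepProb, if_pos hBC] at h2
        have h3 := (mul_ne_zero_iff.mp h2).1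
        have h4 := (Finset.prod_ne_zero_iff.mp h3) x (Finset.mem_sdiff.mpr ⟨hx, hxB⟩)
        simpa using h4
      obtain ⟨u, hu, hw⟩ := exists_mem_of_turnProb_ne_zero w B x hp
      obtain ⟨s, hs, hpath⟩ := ih h1 u hu
      exact ⟨s, hs, hpath.tail hw⟩

/-- `k`-step transition probabilities. -/
noncomputable def stepN (w : V → V → ℝ≥0) : ℕ → Finset V → Finset V → ℝ≥0∞
  | 0, B, C => if C = B then 1 else 0
  | k + 1, B, C => ∑ D : Finset V, stepN w k B D * stepProb w D C

lemma stepN_sum (w : V → V → ℝ≥0) (k : ℕ) (B : Finset V) :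
    ∑ C, stepN w k B C = 1 := by
  induction k with
  | zero => simp [stepN]
  | succ k ih =>
    show (∑ C, ∑ D : Finset V, stepN w k B D * stepProb w D C) = 1
    rw [Finset.sum_comm]
    simp_rw [← Finset.mul_sum, sum_stepProb, mul_one]
    exact ih

lemma stepN_le_one (w : V → V → ℝ≥0) (k : ℕ) (B C : Finset V) :
    stepN w k B C ≤ 1 := by
  rw [← stepN_sum w k B]
  exact Finset.single_le_sum (fun _ _ => zero_le) (Finset.mem_univ C)

lemma state_add (w : V → V → ℝ≥0) (S : Finset V) (t : ℕ) :
    ∀ (k : ℕ) (C : Finset V),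
      state w S (t + k) C = ∑ B : Finset V, state w S t B * stepN w k B C := by
  intro k
  induction k with
  | zero =>
    intro C
    simp [stepN, mul_ite, mul_one, mul_zero]
  | succ k ih =>
    intro C
    show (∑ D : Finset V, state w S (t + k) D * stepProb w D C) = _
    calc (∑ D : Finset V, state w S (t + k) D * stepProb w D C)
        = ∑ D : Finset V, (∑ B : Finset V, state w S t B * stepN w k B D) * stepProb w D C := by
          simp_rw [ih]
      _ = ∑ D : Finset V, ∑ B : Finset V, state w S t B * stepN w k B D * stepProb w D C := by
          simp_rw [Finset.sum_mul]
      _ = ∑ B : Finset V, ∑ D : Finset V, state w S t B * stepN w k B D * stepProb w D C :=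
          Finset.sum_comm
      _ = ∑ B : Finset V, state w S t B * ∑ D : Finset V, stepN w k B D * stepProb w D C := by
          simp_rw [mul_assoc, ← Finset.mul_sum]
      _ = _ := rfl

lemma stepProb_univ_univ (w : V → V → ℝ≥0) :
    stepProb w (Finset.univ : Finset V) Finset.univ = 1 := by
  simp [stepProb]

lemma stepN_univ_succ (w : V → V → ℝ≥0) (k : ℕ) (B : Finset V) :
    stepN w k B Finset.univ ≤ stepN w (k + 1) B Finset.univ := by
  calc stepN w k B Finset.univ
      = stepN w k B Finset.univ * stepProb w Finset.univ Finset.univ := by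
        rw [stepProb_univ_univ, mul_one]
    _ ≤ ∑ D : Finset V, stepN w k B D * stepProb w D Finset.univ :=
        Finset.single_le_sum (f := fun D => stepN w k B D * stepProb w D Finset.univ)
          (fun _ _ => zero_le) (Finset.mem_univ _)
    _ = stepN w (k + 1) B Finset.univ := rfl

lemma stepN_univ_mono (w : V → V → ℝ≥0) (B : Finset V) {k m : ℕ} (h : k ≤ m) :
    stepN w k B Finset.univ ≤ stepN w m B Finset.univ := by
  induction m with
  | zero => exact Nat.le_zero.mp h ▸ le_rfl
  | succ m ihm =>
    rcases Nat.lt_or_ge k (m + 1) with h' | h'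
    · exact (ihm (Nat.lt_succ_iff.mp h')).trans (stepN_univ_succ w m B)
    · have : k = m + 1 := le_antisymm h h'
      exact this ▸ le_rfl

/-- The set of vertices blue after one deterministic "all eligible turn blue" round. -/
noncomputable def nextSet (w : V → V → ℝ≥0) (B : Finset V) : Finset V :=
  B ∪ Finset.univ.filter (fun x => ∃ u ∈ B, 0 < w u x)

lemma subset_nextSet (w : V → V → ℝ≥0) (B : Finset V) : B ⊆ nextSet w B :=
  Finset.subset_union_left

lemma mem_nextSet_of (w : V → V → ℝ≥0) {B : Finset V} {x : V}
    (h : ∃ u ∈ B, 0 < w u x) : x ∈ nextSet w B := by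
  unfold nextSet
  exact Finset.mem_union_right _ (Finset.mem_filter.mpr ⟨Finset.mem_univ _, h⟩)

lemma turnProb_zero_of_not_mem_nextSet (w : V → V → ℝ≥0) {B : Finset V} {x : V}
    (h : x ∉ nextSet w B) : turnProb w B x = 0 := by
  refine turnProb_eq_zero w B x fun u hu => ?_
  by_contra hne
  exact h (mem_nextSet_of w ⟨u, hu, pos_iff_ne_zero.mpr hne⟩)

lemma stepProb_nextSet_pos (w : V → V → ℝ≥0) (B : Finset V) :
    0 < stepProb w B (nextSet w B) := by
  rw [pos_iff_ne_zero, stepProb, if_pos (subset_nextSet w B)]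
  refine mul_ne_zero ?_ ?_
  · rw [Finset.prod_ne_zero_iff]
    intro x hx
    rw [Finset.mem_sdiff] at hx
    have hxf : x ∈ nextSet w B := hx.1
    unfold nextSet at hxf
    rcases Finset.mem_union.mp hxf with h | h
    · exact absurd h hx.2
    · have := (Finset.mem_filter.mp h).2
      exact ENNReal.coe_ne_zero.mpr (turnProb_pos w B x this).ne'
  · rw [Finset.prod_ne_zero_iff]
    intro x hx
    rw [turnProb_zero_of_not_mem_nextSet w (Finset.mem_compl.mp hx)]
    simp

lemma iterate_nextSet_mono (w : V → V → ℝ≥0) (B : Finset V) {k m : ℕ} (h : k ≤ m) :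
    (nextSet w)^[k] B ⊆ (nextSet w)^[m] B := by
  induction m with
  | zero => exact Nat.le_zero.mp h ▸ subset_rfl
  | succ m ihm =>
    rcases Nat.lt_or_ge k (m + 1) with h' | h'
    · refine (ihm (Nat.lt_succ_iff.mp h')).trans ?_
      rw [Function.iterate_succ_apply']
      exact subset_nextSet w _
    · have : k = m + 1 := le_antisymm h h'
      exact this ▸ subset_rfl

lemma mem_iterate_of_reach {w : V → V → ℝ≥0} {B : Finset V} {s v : V}
    (h : Relation.ReflTransGen (fun a b => 0 < w a b) s v) (hs : s ∈ B) :
    ∃ k, v ∈ (nextSet w)^[k] B := by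
  induction h with
  | refl => exact ⟨0, hs⟩
  | tail hab hbc ih =>
    obtain ⟨k, hk⟩ := ih
    refine ⟨k + 1, ?_⟩
    rw [Function.iterate_succ_apply']
    exact mem_nextSet_of w ⟨_, hk, hbc⟩

lemma exists_iterate_univ {w : V → V → ℝ≥0} {S B : Finset V}
    (hr : ∀ v : V, ∃ s ∈ S, Relation.ReflTransGen (fun a b => 0 < w a b) s v)
    (hB : S ⊆ B) : ∃ K, (nextSet w)^[K] B = Finset.univ := by
  have h : ∀ v : V, ∃ k, v ∈ (nextSet w)^[k] B := by
    intro v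
    obtain ⟨s, hs, hpath⟩ := hr v
    exact mem_iterate_of_reach hpath (hB hs)
  choose f hf using h
  refine ⟨Finset.univ.sup f, Finset.eq_univ_iff_forall.mpr fun v => ?_⟩
  exact iterate_nextSet_mono w B (Finset.le_sup (Finset.mem_univ v)) (hf v)

lemma stepN_iterate_pos (w : V → V → ℝ≥0) (B : Finset V) (k : ℕ) :
    0 < stepN w k B ((nextSet w)^[k] B) := by
  induction k with
  | zero => simp [stepN]
  | succ k ih =>
    have hle : stepN w k B ((nextSet w)^[k] B) *
        stepProb w ((nextSet w)^[k] B) (nextSet w ((nextSet w)^[k] B))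
        ≤ stepN w (k + 1) B ((nextSet w)^[k + 1] B) := by
      rw [Function.iterate_succ_apply']
      exact Finset.single_le_sum
        (f := fun D => stepN w k B D * stepProb w D (nextSet w ((nextSet w)^[k] B)))
        (fun _ _ => zero_le) (Finset.mem_univ _)
    refine lt_of_lt_of_le ?_ hle
    exact ENNReal.mul_pos ih.ne' (stepProb_nextSet_pos w _).ne'

lemma filter_not_ne_univ :
    Finset.univ.filter (fun C : Finset V => ¬ C ≠ Finset.univ) = {Finset.univ} := by
  ext C
  simp [not_not]

lemma mass_split (w : V → V → ℝ≥0) (S : Finset V) (t : ℕ) :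
    (∑ C ∈ Finset.univ.filter (fun C : Finset V => C ≠ Finset.univ), state w S t C)
      + state w S t Finset.univ = 1 := by
  have h := Finset.sum_filter_add_sum_filter_not Finset.univ
    (fun C : Finset V => C ≠ Finset.univ) (state w S t)
  rw [filter_not_ne_univ, Finset.sum_singleton, state_total] at h
  exact h

lemma ept_lt_top (w : V → V → ℝ≥0) (S : Finset V)
    (hr : ∀ v : V, ∃ s ∈ S, Relation.ReflTransGen (fun a b => 0 < w a b) s v) :
    ept w S < ⊤ := by
  classical
  have key : ∀ B : Finset V, S ⊆ B → ∃ k, 0 < stepN w k B Finset.univ := by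
    intro B hB
    obtain ⟨K, hK⟩ := exists_iterate_univ hr hB
    exact ⟨K, hK ▸ stepN_iterate_pos w B K⟩
  choose! kf hkf using key
  obtain ⟨N, hN0, hstep⟩ : ∃ N : ℕ, N ≠ 0 ∧
      ∀ B : Finset V, S ⊆ B → 0 < stepN w N B Finset.univ := by
    refine ⟨Finset.univ.sup kf + 1, Nat.succ_ne_zero _, fun B hB => ?_⟩
    exact lt_of_lt_of_le (hkf B hB)
      (stepN_univ_mono w B ((Finset.le_sup (Finset.mem_univ B)).trans (Nat.le_succ _)))
  obtain ⟨ε, hεpos, hε1, hεB⟩ : ∃ ε : ℝ≥0∞, 0 < ε ∧ ε ≤ 1 ∧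
      ∀ B : Finset V, S ⊆ B → ε ≤ stepN w N B Finset.univ := by
    have hTne : (Finset.univ.filter (fun B : Finset V => S ⊆ B)).Nonempty := ⟨S, by simp⟩
    refine ⟨(Finset.univ.filter (fun B : Finset V => S ⊆ B)).inf' hTne
      (fun B => stepN w N B Finset.univ), ?_, ?_, ?_⟩
    · rw [Finset.lt_inf'_iff]
      intro B hB
      exact hstep B (by simpa using hB)
    · exact (Finset.inf'_le _ (by simp : S ∈ _)).trans (stepN_le_one w N S Finset.univ)
    · intro B hB
      exact Finset.inf'_le _ (by simp [hB])
  set m : ℕ → ℝ≥0∞ := fun t =>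
    ∑ C ∈ Finset.univ.filter (fun C : Finset V => C ≠ Finset.univ), state w S t C with hmdef
  have hsplit : ∀ t, m t + state w S t Finset.univ = 1 := mass_split w S
  have hsu_le : ∀ t, state w S t Finset.univ ≤ 1 := fun t => le_add_self.trans_eq (hsplit t)
  have hm_le : ∀ t, m t ≤ 1 := fun t => (self_le_add_right _ _).trans_eq (hsplit t)
  have hm_eq : ∀ t, m t = 1 - state w S t Finset.univ := fun t =>
    ENNReal.eq_sub_of_add_eq (((hsu_le t).trans_lt ENNReal.one_lt_top).ne) (hsplit t)
  have hsu_mono : Monotone (fun t => state w S t Finset.univ) := by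
    refine monotone_nat_of_le_succ fun t => ?_
    have h1 : state w S (t + 1) Finset.univ
        = ∑ B : Finset V, state w S t B * stepProb w B Finset.univ := rfl
    rw [h1]
    calc state w S t Finset.univ
        = state w S t Finset.univ * stepProb w Finset.univ Finset.univ := by
          rw [stepProb_univ_univ, mul_one]
      _ ≤ _ := Finset.single_le_sum (f := fun B => state w S t B * stepProb w B Finset.univ)
          (fun _ _ => zero_le) (Finset.mem_univ _)
  have hm_anti : ∀ {a b : ℕ}, a ≤ b → m b ≤ m a := fun {a b} hab => by
    rw [hm_eq a, hm_eq b]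
    exact tsub_le_tsub_left (hsu_mono hab) 1
  have hcontr : ∀ t, m (t + N) ≤ (1 - ε) * m t := by
    intro t
    have hstate : state w S (t + N) Finset.univ
        = ∑ B : Finset V, state w S t B * stepN w N B Finset.univ :=
      state_add w S t N Finset.univ
    have hlow : state w S t Finset.univ + ε * m t ≤ state w S (t + N) Finset.univ := by
      rw [hstate]
      have hsp := Finset.sum_filter_add_sum_filter_not Finset.univ
        (fun B : Finset V => B ≠ Finset.univ)
        (fun B => state w S t B * stepN w N B Finset.univ)
      rw [filter_not_ne_univ, Finset.sum_singleton] at hsp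
      rw [← hsp]
      rw [add_comm (∑ B ∈ Finset.univ.filter (fun B : Finset V => B ≠ Finset.univ),
        state w S t B * stepN w N B Finset.univ)]
      refine add_le_add ?_ ?_
      · refine le_mul_of_one_le_right zero_le ?_
        have h0 : stepN w 0 (Finset.univ : Finset V) (Finset.univ : Finset V) = 1 := by
          simp [stepN]
        exact h0 ▸ stepN_univ_mono w _ (Nat.zero_le N)
      · rw [hmdef, Finset.mul_sum]
        refine Finset.sum_le_sum fun B hB => ?_
        rcases eq_or_ne (state w S t B) 0 with h0 | h0
        · simp [h0]
        · rw [mul_comm]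
          exact mul_le_mul_right (hεB B (subset_of_state_ne_zero h0)) _
    have hfin : state w S t Finset.univ ≠ ⊤ := ((hsu_le t).trans_lt ENNReal.one_lt_top).ne
    calc m (t + N) = 1 - state w S (t + N) Finset.univ := hm_eq _
      _ ≤ 1 - (state w S t Finset.univ + ε * m t) := tsub_le_tsub_left hlow 1
      _ = (state w S t Finset.univ + m t) - (state w S t Finset.univ + ε * m t) := by
          rw [add_comm (state w S t Finset.univ) (m t), hsplit t]
      _ = m t - ε * m t := by
          rw [tsub_add_eq_tsub_tsub, ENNReal.add_sub_cancel_left hfin]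
      _ = (1 - ε) * m t := by
          rw [ENNReal.sub_mul (fun _ _ => ((hm_le t).trans_lt ENNReal.one_lt_top).ne), one_mul]
  have hdecay : ∀ j, m (N * j) ≤ (1 - ε) ^ j := by
    intro j
    induction j with
    | zero => simpa using hm_le 0
    | succ j ih =>
      have hNj : N * (j + 1) = N * j + N := by ring
      rw [hNj, pow_succ]
      calc m (N * j + N) ≤ (1 - ε) * m (N * j) := hcontr _
        _ ≤ (1 - ε) * (1 - ε) ^ j := mul_le_mul_right ih _
        _ = (1 - ε) ^ j * (1 - ε) := mul_comm _ _
  have hbound : ∀ t, m t ≤ (1 - ε) ^ (t / N) := by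
    intro t
    refine le_trans (hm_anti ?_) (hdecay (t / N))
    calc N * (t / N) = t / N * N := Nat.mul_comm _ _
      _ ≤ t := Nat.div_mul_le_self t N
  haveI : NeZero N := ⟨hN0⟩
  have hsum : (∑' t : ℕ, (1 - ε) ^ (t / N)) = (N : ℝ≥0∞) * (1 - (1 - ε))⁻¹ := by
    rw [← Equiv.tsum_eq (Nat.divModEquiv N).symm (fun t => (1 - ε) ^ (t / N)),
      ENNReal.tsum_prod']
    have hterm : ∀ (k : ℕ) (j : Fin N),
        (1 - ε) ^ (((Nat.divModEquiv N).symm (k, j) : ℕ) / N) = (1 - ε) ^ k := by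
      intro k j
      have h : ((Nat.divModEquiv N).symm (k, j) : ℕ) = k * N + (j : ℕ) := rfl
      rw [h, Nat.mul_comm, Nat.mul_add_div (Nat.pos_of_ne_zero hN0),
        Nat.div_eq_of_lt j.isLt, Nat.add_zero]
    simp_rw [hterm]
    simp_rw [tsum_fintype, Finset.sum_const, Finset.card_univ, Fintype.card_fin, nsmul_eq_mul]
    rw [ENNReal.tsum_mul_left, ENNReal.tsum_geometric]
  have h1ε : 1 - (1 - ε) = ε := ENNReal.sub_sub_cancel ENNReal.one_ne_top hε1
  have hle : ept w S ≤ (N : ℝ≥0∞) * ε⁻¹ := by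
    calc ept w S ≤ ∑' t : ℕ, (1 - ε) ^ (t / N) := ENNReal.tsum_le_tsum hbound
      _ = (N : ℝ≥0∞) * (1 - (1 - ε))⁻¹ := hsum
      _ = (N : ℝ≥0∞) * ε⁻¹ := by rw [h1ε]
  exact lt_of_le_of_lt hle
    (ENNReal.mul_lt_top (ENNReal.natCast_lt_top N) (ENNReal.inv_lt_top.mpr hεpos))

end RZF

/-- For a finite weighted directed graph `G` (weights `w`) and
initial blue set `S`, the expected propagation time of RZF is finite iff every
vertex is reachable from `S` in the subgraph `G⁺` of positive-weight edges. -/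
theorem rzf_ept_finite_iff_reachable {V : Type*} [Fintype V] [DecidableEq V]
    (w : V → V → ℝ≥0) (S : Finset V) :
    RZF.ept w S < ⊤ ↔
      ∀ v : V, ∃ s ∈ S, Relation.ReflTransGen (fun a b => 0 < w a b) s v := by
  constructor
  · intro hfin v
    by_contra hc
    push_neg at hc
    have hzero : ∀ t, RZF.state w S t Finset.univ = 0 := by
      intro t
      by_contra h0
      obtain ⟨s, hs, hp⟩ := RZF.state_reachable h0 v (Finset.mem_univ v)
      exact hc s hs hp
    have h1 : ∀ t : ℕ, (∑ C ∈ Finset.univ.filter (fun C : Finset V => C ≠ Finset.univ),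
        RZF.state w S t C) = 1 := by
      intro t
      have h := RZF.mass_split w S t
      rw [hzero t, add_zero] at h
      exact h
    have h2 : RZF.ept w S = ⊤ := by
      rw [RZF.ept]
      simp_rw [h1]
      exact ENNReal.tsum_const_eq_top_of_ne_zero one_ne_zero
    rw [h2] at hfin
    exact lt_irrefl _ hfin
  · exact fun hr => RZF.ept_lt_top w S hr
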